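/- arXiv:2311.10528 — 3 statements merged into one kernel-verified Lean document; each statement's English description precedes it below -/
import Mathlib

section
/- Let n ≥ 3 and k_1,…,k_n > 0. Then there exists a unique k' > 1 such that Σ_{i=1}^n 2·arctan(√((k')²−1)/k_i) = 2π. -/
open Real Filter Topology

/-- For `n ≥ 3` and positive geodesic curvatures `k_1, …, k_n`, there exists a unique
`k' > 1` such that `∑ i, 2 · arctan(√((k')² − 1)/k_i) = 2π`. -/
theorem stmt3 (n : ℕ) (hn : 3 ≤ n) (k : Fin n → ℝ) (hk : ∀ i, 0 < k i) :
    ∃! k' : ℝ, 1 < k' ∧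
      ∑ i : Fin n, 2 * Real.arctan (Real.sqrt (k' ^ 2 - 1) / k i) = 2 * Real.pi := by
  have hpos : (0:ℝ) < Real.pi := Real.pi_pos
  set f : ℝ → ℝ := fun x => ∑ i : Fin n, 2 * Real.arctan (Real.sqrt (x ^ 2 - 1) / k i)
    with hfdef
  have hcont : Continuous f := by
    apply continuous_finset_sum
    intro i _
    exact continuous_const.mul (Real.continuous_arctan.comp
      ((Real.continuous_sqrt.comp ((continuous_pow 2).sub continuous_const)).div_const _))
  have hne : (Finset.univ : Finset (Fin n)).Nonempty := by
    have : NeZero n := ⟨by omega⟩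
    exact Finset.univ_nonempty
  have hmono : StrictMonoOn f (Set.Ici 1) := by
    intro a ha b hb hab
    apply Finset.sum_lt_sum_of_nonempty hne
    intro i _
    have ha1 : (1:ℝ) ≤ a := ha
    have h1 : Real.sqrt (a ^ 2 - 1) < Real.sqrt (b ^ 2 - 1) := by
      apply Real.sqrt_lt_sqrt
      · nlinarith
      · nlinarith
    have h2 : Real.sqrt (a ^ 2 - 1) / k i < Real.sqrt (b ^ 2 - 1) / k i :=
      (div_lt_div_iff_of_pos_right (hk i)).mpr h1
    have := Real.arctan_strictMono h2
    linarith
  have hf1 : f 1 = 0 := by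
    simp [hfdef]
  -- limit at infinity
  have hlim : Tendsto f atTop (𝓝 ((n : ℝ) * Real.pi)) := by
    have heq : (n : ℝ) * Real.pi = ∑ _i : Fin n, 2 * (Real.pi / 2) := by
      rw [Finset.sum_const, Finset.card_univ, Fintype.card_fin, nsmul_eq_mul]
      ring
    rw [heq]
    apply tendsto_finset_sum
    intro i _
    have h0 : Tendsto (fun x : ℝ => x ^ 2) atTop atTop :=
      tendsto_pow_atTop (by norm_num)
    have h1 : Tendsto (fun x : ℝ => x ^ 2 - 1) atTop atTop :=
      tendsto_atTop_add_const_right atTop (-1) h0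
    have hsq : Tendsto Real.sqrt atTop atTop := by
      rw [tendsto_atTop_atTop]
      intro c
      refine ⟨(max c 0) ^ 2, fun x hx => ?_⟩
      have h0 : (0:ℝ) ≤ max c 0 := le_max_right _ _
      have hle : max c 0 ≤ Real.sqrt x := by
        rw [show max c 0 = Real.sqrt ((max c 0) ^ 2) from (Real.sqrt_sq h0).symm]
        exact Real.sqrt_le_sqrt hx
      exact le_trans (le_max_left _ _) hle
    have h2 : Tendsto (fun x : ℝ => Real.sqrt (x ^ 2 - 1) / k i) atTop atTop :=
      (hsq.comp h1).atTop_div_const (hk i)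
    have h3 : Tendsto (fun x : ℝ => Real.arctan (Real.sqrt (x ^ 2 - 1) / k i)) atTop
        (𝓝 (Real.pi / 2)) :=
      (Real.tendsto_arctan_atTop.mono_right nhdsWithin_le_nhds).comp h2
    exact h3.const_mul 2
  have hlt : 2 * Real.pi < (n : ℝ) * Real.pi := by
    have : (3:ℝ) ≤ (n:ℝ) := by exact_mod_cast hn
    nlinarith
  have hev : ∀ᶠ x in atTop, 2 * Real.pi < f x := hlim.eventually (eventually_gt_nhds hlt)
  obtain ⟨b, hb2, hb1⟩ := (hev.and (eventually_gt_atTop 1)).exists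
  -- IVT
  have hivt : 2 * Real.pi ∈ f '' Set.Icc 1 b := by
    apply intermediate_value_Icc hb1.le hcont.continuousOn
    constructor
    · rw [hf1]; positivity
    · exact hb2.le
  obtain ⟨c, hc, hfc⟩ := hivt
  have hc1 : 1 < c := by
    rcases lt_or_eq_of_le hc.1 with h | h
    · exact h
    · exfalso
      rw [← h, hf1] at hfc
      nlinarith
  refine ⟨c, ⟨hc1, hfc⟩, ?_⟩
  rintro y ⟨hy1, hyf⟩
  exact hmono.injOn (Set.mem_Ici.mpr hy1.le) (Set.mem_Ici.mpr hc1.le) (hyf.trans hfc.symm)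
end

section
/- Let n ≥ 3 and define F: ℝ₊ⁿ × (1,∞) → ℝ by F(k_1,…,k_n; k') = Σ_{i=1}^n 2·arctan(√((k')²−1)/k_i) − 2π. Then the unique solution k_P(k_1,…,k_n) of F = 0 is a C¹ function of (k_1,…,k_n), with ∂k_P/∂k_i > 0 for each i. -/
open Real Filter

namespace Stmt4Aux

/-- The function `s ↦ ∑ i, arctan (s / k i)`. -/
noncomputable def f (n : ℕ) (k : Fin n → ℝ) (s : ℝ) : ℝ := ∑ i, Real.arctan (s / k i)

open Classical in
/-- The unique positive solution of `f n k s = π` (when it exists). -/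
noncomputable def sfun (n : ℕ) (k : Fin n → ℝ) : ℝ :=
  if h : ∃ s, 0 < s ∧ f n k s = Real.pi then h.choose else 1

theorem f_strictMono {n : ℕ} {k : Fin n → ℝ} (hk : ∀ i, 0 < k i) (hne : Nonempty (Fin n)) :
    StrictMono (f n k) := by
  intro a b hab
  refine Finset.sum_lt_sum_of_nonempty Finset.univ_nonempty fun i _ => ?_
  exact Real.arctan_strictMono (by exact div_lt_div_of_pos_right hab (hk i))

theorem f_continuous {n : ℕ} (k : Fin n → ℝ) : Continuous (f n k) := by
  exact continuous_finset_sum _ fun i _ =>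
    Real.continuous_arctan.comp (continuous_id.div_const (k i))

theorem f_exists {n : ℕ} {k : Fin n → ℝ} (hn : 3 ≤ n) (hk : ∀ i, 0 < k i) :
    ∃ s, 0 < s ∧ f n k s = Real.pi := by
  have hne : Nonempty (Fin n) := ⟨⟨0, by omega⟩⟩
  have hlim : Tendsto (f n k) atTop (nhds (∑ _i : Fin n, Real.pi / 2)) := by
    refine tendsto_finset_sum _ fun i _ => ?_
    have h1 : Tendsto (fun s : ℝ => s / k i) atTop atTop :=
      Tendsto.atTop_div_const (hk i) tendsto_id
    exact (Real.tendsto_arctan_atTop.mono_right nhdsWithin_le_nhds).comp h1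
  have hgt : Real.pi < ∑ _i : Fin n, Real.pi / 2 := by
    rw [Finset.sum_const, Finset.card_univ, Fintype.card_fin, nsmul_eq_mul]
    have : (3 : ℝ) ≤ n := by exact_mod_cast hn
    nlinarith [Real.pi_pos]
  have hev : ∀ᶠ s in atTop, Real.pi < f n k s :=
    hlim.eventually (eventually_gt_nhds hgt)
  obtain ⟨M, hM, hM0⟩ := (hev.and (eventually_ge_atTop (0 : ℝ))).exists
  have h0 : f n k 0 = 0 := by simp [f]
  have : Real.pi ∈ Set.Icc (f n k 0) (f n k M) := by
    rw [h0]; exact ⟨Real.pi_pos.le, hM.le⟩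
  obtain ⟨s, hs, hfs⟩ := intermediate_value_Icc hM0 ((f_continuous k).continuousOn) this
  refine ⟨s, ?_, hfs⟩
  rcases lt_or_eq_of_le hs.1 with h | h
  · exact h
  · exfalso; rw [← h, h0] at hfs; exact Real.pi_ne_zero hfs.symm

theorem sfun_spec {n : ℕ} {k : Fin n → ℝ} (hn : 3 ≤ n) (hk : ∀ i, 0 < k i) :
    0 < sfun n k ∧ f n k (sfun n k) = Real.pi := by
  have h := f_exists hn hk
  rw [sfun, dif_pos h]
  exact ⟨h.choose_spec.1, h.choose_spec.2⟩

theorem sfun_unique {n : ℕ} {k : Fin n → ℝ} (hn : 3 ≤ n) (hk : ∀ i, 0 < k i) {s : ℝ}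
    (hs : f n k s = Real.pi) : s = sfun n k := by
  have hne : Nonempty (Fin n) := ⟨⟨0, by omega⟩⟩
  exact (f_strictMono hk hne).injective (by rw [hs, (sfun_spec hn hk).2])

theorem hasDerivAt_f {n : ℕ} (k : Fin n → ℝ) (s : ℝ) :
    HasDerivAt (f n k) (∑ i, (1 / (1 + (s / k i) ^ 2)) * (1 / k i)) s := by
  refine HasDerivAt.fun_sum fun i _ => ?_
  exact (Real.hasDerivAt_arctan (s / k i)).comp s ((hasDerivAt_id s).div_const (k i))

theorem B_pos {n : ℕ} {k : Fin n → ℝ} (hk : ∀ i, 0 < k i) (hne : Nonempty (Fin n)) (s : ℝ) :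
    0 < ∑ i, (1 / (1 + (s / k i) ^ 2)) * (1 / k i) := by
  refine Finset.sum_pos (fun i _ => ?_) Finset.univ_nonempty
  have h1 := hk i
  positivity

theorem contDiffAt_G {n : ℕ} {k₀ : Fin n → ℝ} (hk : ∀ i, 0 < k₀ i) (s₀ : ℝ) :
    ContDiffAt ℝ 1 (fun p : (Fin n → ℝ) × ℝ => f n p.1 p.2) (k₀, s₀) := by
  refine ContDiffAt.sum fun i _ => ?_
  refine Real.contDiff_arctan.contDiffAt.comp _ (ContDiffAt.div ?_ ?_ ?_)
  · exact contDiff_snd.contDiffAt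
  · exact (((ContinuousLinearMap.proj i : (Fin n → ℝ) →L[ℝ] ℝ).comp
      (ContinuousLinearMap.fst ℝ (Fin n → ℝ) ℝ)).contDiff).contDiffAt
  · exact (hk i).ne'

theorem isOpen_orthant (n : ℕ) : IsOpen {k : Fin n → ℝ | ∀ i, 0 < k i} := by
  have : {k : Fin n → ℝ | ∀ i, 0 < k i} = Set.pi Set.univ (fun _ => Set.Ioi (0:ℝ)) := by
    ext k; simp [Set.mem_pi]
  rw [this]
  exact isOpen_set_pi Set.finite_univ (fun i _ => isOpen_Ioi)

theorem sfun_contDiffAt {n : ℕ} {k₀ : Fin n → ℝ} (hn : 3 ≤ n) (hk : ∀ i, 0 < k₀ i) :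
    ContDiffAt ℝ 1 (sfun n) k₀ := by
  have hne : Nonempty (Fin n) := ⟨⟨0, by omega⟩⟩
  set E := (Fin n → ℝ) × ℝ
  set s₀ := sfun n k₀ with hs₀
  set p₀ : E := (k₀, s₀) with hp₀
  set G : E → ℝ := fun p => f n p.1 p.2 with hG
  set Φ : E → E := fun p => (p.1, G p) with hΦdef
  have hGc : ContDiffAt ℝ 1 G p₀ := contDiffAt_G hk s₀
  have hΦ : ContDiffAt ℝ 1 Φ p₀ := ContDiffAt.prodMk contDiffAt_fst hGc
  set dG : E →L[ℝ] ℝ := fderiv ℝ G p₀ with hdG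
  have hGd : HasFDerivAt G dG p₀ := (hGc.differentiableAt one_ne_zero).hasFDerivAt
  set L : E →L[ℝ] E := (ContinuousLinearMap.fst ℝ (Fin n → ℝ) ℝ).prod dG with hL
  have hΦd : HasFDerivAt Φ L p₀ := HasFDerivAt.prodMk hasFDerivAt_fst hGd
  set B : ℝ := ∑ i, (1 / (1 + (s₀ / k₀ i) ^ 2)) * (1 / k₀ i) with hB
  have hBpos : 0 < B := B_pos hk hne s₀
  have hdir : dG (0, 1) = B := by
    have hc : HasDerivAt (fun s : ℝ => ((k₀, s) : E)) ((0 : Fin n → ℝ), (1:ℝ)) s₀ :=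
      HasDerivAt.prodMk (hasDerivAt_const s₀ k₀) (hasDerivAt_id s₀)
    have h1 : HasDerivAt (fun s : ℝ => G (k₀, s)) (dG (0, 1)) s₀ :=
      hGd.comp_hasDerivAt s₀ hc
    have h2 : HasDerivAt (fun s : ℝ => G (k₀, s)) B s₀ := hasDerivAt_f k₀ s₀
    exact h1.unique h2
  have hinj : Function.Injective L := by
    have h0 : ∀ p : E, L p = 0 → p = 0 := by
      rintro ⟨h, t⟩ hp
      have h1 : h = 0 := congrArg Prod.fst hp
      have h2 : dG (h, t) = 0 := congrArg Prod.snd hp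
      subst h1
      have h3 : ((0 : Fin n → ℝ), t) = t • ((0 : Fin n → ℝ), (1:ℝ)) := by
        simp [Prod.smul_def]
      rw [h3, map_smul, hdir, smul_eq_mul] at h2
      have ht : t = 0 := by
        rcases mul_eq_zero.mp h2 with h | h
        · exact h
        · exact absurd h hBpos.ne'
      simp [ht]; rfl
    intro a b hab
    have := h0 (a - b) (by rw [map_sub, hab, sub_self])
    exact sub_eq_zero.mp this
  set e : E ≃L[ℝ] E :=
    (LinearEquiv.ofInjectiveEndo (L : E →ₗ[ℝ] E) hinj).toContinuousLinearEquiv with he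
  have hecoe : (e : E →L[ℝ] E) = L := by
    refine ContinuousLinearMap.ext fun p => ?_
    show (LinearEquiv.ofInjectiveEndo (L : E →ₗ[ℝ] E) hinj).toContinuousLinearEquiv p = L p
    rw [LinearEquiv.coe_toContinuousLinearEquiv', LinearEquiv.coe_ofInjectiveEndo]
    rfl
  have hΦd' : HasFDerivAt Φ (e : E →L[ℝ] E) p₀ := by rw [hecoe]; exact hΦd
  set Ψ : E → E := hΦ.localInverse hΦd' one_ne_zero with hΨ
  have hΨc : ContDiffAt ℝ 1 Ψ (Φ p₀) := hΦ.to_localInverse hΦd' one_ne_zero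
  have hri : ∀ᶠ y in nhds (Φ p₀), Φ (Ψ y) = y :=
    (hΦ.hasStrictFDerivAt' hΦd' one_ne_zero).eventually_right_inverse
  have hΦp₀ : Φ p₀ = (k₀, Real.pi) := by
    simp only [hΦdef, hG, hp₀]
    rw [(sfun_spec hn hk).2]
  set σ : (Fin n → ℝ) → ℝ := fun k => (Ψ (k, Real.pi)).2 with hσ
  have hιc : ContDiffAt ℝ 1 (fun k : Fin n → ℝ => ((k, Real.pi) : E)) k₀ :=
    ContDiffAt.prodMk contDiffAt_id contDiffAt_const
  have hσc : ContDiffAt ℝ 1 σ k₀ := by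
    refine contDiffAt_snd.comp _ (ContDiffAt.comp _ ?_ hιc)
    rw [← hΦp₀]; exact hΨc
  refine hσc.congr_of_eventuallyEq ?_
  have hev1 : ∀ᶠ k in nhds k₀, Φ (Ψ (k, Real.pi)) = (k, Real.pi) := by
    have ht : Tendsto (fun k : Fin n → ℝ => ((k, Real.pi) : E)) (nhds k₀) (nhds (Φ p₀)) := by
      rw [hΦp₀]; exact (continuous_id.prodMk continuous_const).continuousAt
    exact ht.eventually hri
  have hev2 : ∀ᶠ k in nhds k₀, ∀ i, 0 < k i :=
    (isOpen_orthant n).eventually_mem hk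
  filter_upwards [hev1, hev2] with k h1 h2
  have hfst : (Ψ (k, Real.pi)).1 = k := congrArg Prod.fst h1
  have hsnd : G (Ψ (k, Real.pi)) = Real.pi := congrArg Prod.snd h1
  have : f n k (σ k) = Real.pi := by
    rw [hσ]
    calc f n k (Ψ (k, Real.pi)).2 = f n (Ψ (k, Real.pi)).1 (Ψ (k, Real.pi)).2 := by rw [hfst]
    _ = Real.pi := hsnd
  exact (sfun_unique hn h2 this).symm

theorem partial_deriv {n : ℕ} (hn : 3 ≤ n) (k : Fin n → ℝ) (hk : ∀ i, 0 < k i) (i : Fin n) :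
    ∃ d : ℝ, 0 < d ∧
      HasDerivAt (fun t : ℝ => Real.sqrt (sfun n (Function.update k i t) ^ 2 + 1)) d (k i) := by
  classical
  have hne : Nonempty (Fin n) := ⟨⟨0, by omega⟩⟩
  set ψ : ℝ → ℝ := fun t => sfun n (Function.update k i t) with hψdef
  set s : ℝ := sfun n k with hs
  have hs0 : 0 < s := (sfun_spec hn hk).1
  have hupdself : Function.update k i (k i) = k := Function.update_eq_self i k
  have hψki : ψ (k i) = s := by rw [hψdef]; simp only [hupdself]; rfl
  have hupdate : HasDerivAt (fun t : ℝ => Function.update k i t) (Pi.single i (1:ℝ)) (k i) := by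
    have heq : (fun t : ℝ => Function.update k i t)
        = fun t => k + (t - k i) • (Pi.single i (1:ℝ) : Fin n → ℝ) := by
      funext t; funext j
      by_cases h : j = i
      · subst h; simp
      · simp [Function.update_of_ne h, Pi.single_eq_of_ne h]
    rw [heq]
    simpa using (((hasDerivAt_id (k i)).sub_const (k i)).smul_const (Pi.single i (1:ℝ))).const_add k
  have hFd : HasFDerivAt (sfun n) (fderiv ℝ (sfun n) k) (Function.update k i (k i)) := by
    rw [hupdself]
    exact ((sfun_contDiffAt hn hk).differentiableAt one_ne_zero).hasFDerivAt
  have hψ : HasDerivAt ψ (fderiv ℝ (sfun n) k (Pi.single i (1:ℝ))) (k i) :=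
    hFd.comp_hasDerivAt (k i) hupdate
  set d₀ : ℝ := fderiv ℝ (sfun n) k (Pi.single i (1:ℝ)) with hd₀
  set c : Fin n → ℝ := fun j =>
    if j = i then (1 / (1 + (s / k i) ^ 2)) * ((d₀ * k i - s * 1) / k i ^ 2)
    else (1 / (1 + (s / k j) ^ 2)) * (d₀ / k j) with hc
  have hterm : ∀ j : Fin n,
      HasDerivAt (fun t => Real.arctan (ψ t / Function.update k i t j)) (c j) (k i) := by
    intro j
    by_cases h : j = i
    · rw [h]
      have heq : (fun t => Real.arctan (ψ t / Function.update k i t i))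
          = fun t => Real.arctan (ψ t / t) := by
        funext t; rw [Function.update_self]
      rw [heq, hc]
      simp only [if_pos rfl]
      have hdiv : HasDerivAt (fun t => ψ t / t) ((d₀ * k i - ψ (k i) * 1) / k i ^ 2) (k i) :=
        hψ.div (hasDerivAt_id (k i)) (hk i).ne'
      rw [hψki] at hdiv
      have h2 := hdiv.arctan
      rw [hψki] at h2
      exact h2
    · have heq : (fun t => Real.arctan (ψ t / Function.update k i t j))
          = fun t => Real.arctan (ψ t / k j) := by
        funext t; rw [Function.update_of_ne h]
      rw [heq, hc]
      simp only [if_neg h]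
      have hdiv : HasDerivAt (fun t => ψ t / k j) (d₀ / k j) (k i) := hψ.div_const (k j)
      have h2 := hdiv.arctan
      rw [hψki] at h2
      exact h2
  have hsum : HasDerivAt (fun t => ∑ j, Real.arctan (ψ t / Function.update k i t j))
      (∑ j, c j) (k i) := HasDerivAt.fun_sum fun j _ => hterm j
  have hev : (fun t => ∑ j, Real.arctan (ψ t / Function.update k i t j))
      =ᶠ[nhds (k i)] fun _ => Real.pi := by
    filter_upwards [Ioi_mem_nhds (hk i)] with t ht
    have hkt : ∀ j, 0 < Function.update k i t j := by
      intro j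
      by_cases h : j = i
      · subst h; rw [Function.update_self]; exact ht
      · rw [Function.update_of_ne h]; exact hk j
    exact (sfun_spec hn hkt).2
  have h0 : HasDerivAt (fun t => ∑ j, Real.arctan (ψ t / Function.update k i t j)) 0 (k i) :=
    (hasDerivAt_const (k i) Real.pi).congr_of_eventuallyEq hev
  have heq0 : ∑ j, c j = 0 := hsum.unique h0
  set B : ℝ := ∑ j, (1 / (1 + (s / k j) ^ 2)) * (1 / k j) with hB
  have hBpos : 0 < B := B_pos hk hne s
  have hsplit : ∑ j, c j
      = d₀ * B - s * ((1 / (1 + (s / k i) ^ 2)) * (1 / k i ^ 2)) := by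
    have hcongr : ∀ j ∈ Finset.univ, c j
        = d₀ * ((1 / (1 + (s / k j) ^ 2)) * (1 / k j))
          - (if j = i then s * ((1 / (1 + (s / k i) ^ 2)) * (1 / k i ^ 2)) else 0) := by
      intro j _
      by_cases h : j = i
      · subst h
        simp only [hc, if_pos rfl, eq_self_iff_true, ↓reduceIte]
        have h1 : k j ≠ 0 := (hk j).ne'
        field_simp
      · simp only [hc, if_neg h]
        ring
    rw [Finset.sum_congr rfl hcongr, Finset.sum_sub_distrib, ← Finset.mul_sum, ← hB,
      Finset.sum_ite_eq' Finset.univ i]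
    simp
  have h3 : d₀ * B = s * ((1 / (1 + (s / k i) ^ 2)) * (1 / k i ^ 2)) := by
    rw [hsplit] at heq0
    linarith
  have hd₀' : d₀ = s * ((1 / (1 + (s / k i) ^ 2)) * (1 / k i ^ 2)) / B :=
    (eq_div_iff hBpos.ne').mpr h3
  have hd₀pos : 0 < d₀ := by
    rw [hd₀']
    have h1 := hk i
    positivity
  have hu : HasDerivAt (fun t => ψ t ^ 2 + 1) (2 * ψ (k i) ^ 1 * d₀) (k i) :=
    (hψ.pow 2).add_const 1
  have hnz : ψ (k i) ^ 2 + 1 ≠ 0 := by positivity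
  have hfinal := hu.sqrt hnz
  refine ⟨_, ?_, hfinal⟩
  rw [hψki]
  have h2 : 0 < Real.sqrt (s ^ 2 + 1) := Real.sqrt_pos.mpr (by positivity)
  positivity

end Stmt4Aux

/-- For `n ≥ 3`, the unique solution `k_P(k_1,…,k_n) > 1` of
`∑ i, 2·arctan(√((k')²−1)/k_i) = 2π` is a `C¹` function of `(k_1,…,k_n)` on the positive
orthant, and each partial derivative `∂k_P/∂k_i` is positive. -/
theorem stmt4 (n : ℕ) (hn : 3 ≤ n) :
    ∃ kP : (Fin n → ℝ) → ℝ,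
      (∀ k : Fin n → ℝ, (∀ i, 0 < k i) →
        1 < kP k ∧
        ∑ i : Fin n, 2 * Real.arctan (Real.sqrt (kP k ^ 2 - 1) / k i) = 2 * Real.pi) ∧
      ContDiffOn ℝ 1 kP {k : Fin n → ℝ | ∀ i, 0 < k i} ∧
      ∀ k : Fin n → ℝ, (∀ i, 0 < k i) → ∀ i : Fin n,
        ∃ d : ℝ, 0 < d ∧
          HasDerivAt (fun t : ℝ => kP (Function.update k i t)) d (k i) := by
  refine ⟨fun k => Real.sqrt (Stmt4Aux.sfun n k ^ 2 + 1), fun k hk => ?_, ?_,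
    fun k hk i => Stmt4Aux.partial_deriv hn k hk i⟩
  · obtain ⟨hs0, hπ⟩ := Stmt4Aux.sfun_spec hn hk
    set s := Stmt4Aux.sfun n k with hsdef
    have hsq : Real.sqrt (s ^ 2 + 1) ^ 2 = s ^ 2 + 1 := Real.sq_sqrt (by positivity)
    have harg : Real.sqrt (Real.sqrt (s ^ 2 + 1) ^ 2 - 1) = s := by
      rw [hsq, show s ^ 2 + 1 - 1 = s ^ 2 by ring, Real.sqrt_sq hs0.le]
    constructor
    · have h1 : Real.sqrt 1 < Real.sqrt (s ^ 2 + 1) :=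
        Real.sqrt_lt_sqrt zero_le_one (by nlinarith)
      rwa [Real.sqrt_one] at h1
    · simp only [← hsdef, harg]
      rw [← Finset.mul_sum]
      have hf : ∑ i : Fin n, Real.arctan (s / k i) = Real.pi := hπ
      rw [hf]
  · intro k hk
    have h := Stmt4Aux.sfun_contDiffAt hn hk
    have hu : ContDiffAt ℝ 1 (fun k => Stmt4Aux.sfun n k ^ 2 + 1) k := by
      have : (fun k => Stmt4Aux.sfun n k ^ 2 + 1)
          = fun k => Stmt4Aux.sfun n k * Stmt4Aux.sfun n k + 1 := by
        funext k; ring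
      rw [this]
      exact (h.mul h).add contDiffAt_const
    have hnz : Stmt4Aux.sfun n k ^ 2 + 1 ≠ 0 := by positivity
    exact ((Real.contDiffAt_sqrt hnz).comp k hu).contDiffWithinAt
end

section
/- In any generalized hyperbolic circle packing of an abstract n-gon, the total geodesic curvature L_{i,P} of each arc satisfies L_{i,P} < π. For the case k_i > 1 this reads: for all x > 1 and y > 1, (x/√(x²−1))·2·arctan(√(x²−1)/y) < π, and moreover lim_{x→+∞} (x/√(x²−1))·2·arctan(√(x²−1)/y) = π for fixed y > 1. -/
open Real Filter Topology

/-- For all `x > 1`, `y > 1`: `(x/√(x²−1))·2·arctan(√(x²−1)/y) < π`, and for fixed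
`y > 1` this quantity tends to `π` as `x → +∞`. -/
theorem stmt10 (y : ℝ) (hy : 1 < y) :
    (∀ x : ℝ, 1 < x →
      x / Real.sqrt (x ^ 2 - 1) * (2 * Real.arctan (Real.sqrt (x ^ 2 - 1) / y))
        < Real.pi) ∧
    Tendsto (fun x : ℝ =>
        x / Real.sqrt (x ^ 2 - 1) * (2 * Real.arctan (Real.sqrt (x ^ 2 - 1) / y)))
      atTop (nhds Real.pi) := by
  have hy0 : (0:ℝ) < y := by linarith
  constructor
  · intro x hx
    have hx0 : (0:ℝ) < x := by linarith
    have hs2 : (0:ℝ) < x ^ 2 - 1 := by nlinarith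
    set s := Real.sqrt (x ^ 2 - 1) with hs
    have hs0 : 0 < s := Real.sqrt_pos.mpr hs2
    have hssq : s ^ 2 = x ^ 2 - 1 := Real.sq_sqrt hs2.le
    set t := s / y with ht
    have ht0 : 0 < t := div_pos hs0 hy0
    -- Jordan: 2/π * arctan t ≤ sin (arctan t)
    have hθmem := Real.arctan_mem_Ioo t
    have hJ : 2 / π * Real.arctan t ≤ Real.sin (Real.arctan t) :=
      Real.mul_le_sin (by simpa using (Real.arctan_strictMono ht0).le) hθmem.2.le
    rw [Real.sin_arctan] at hJ
    -- t / √(1+t²) = s / √(y²+s²)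
    have hkey : t / Real.sqrt (1 + t ^ 2) = s / Real.sqrt (y ^ 2 + s ^ 2) := by
      rw [ht]
      rw [show 1 + (s/y)^2 = (y^2 + s^2)/y^2 by field_simp]
      rw [Real.sqrt_div' _ (by positivity), Real.sqrt_sq hy0.le]
      field_simp
    rw [hkey] at hJ
    have hπ : (0:ℝ) < π := Real.pi_pos
    have h1 : 2 * Real.arctan t ≤ π * (s / Real.sqrt (y ^ 2 + s ^ 2)) := by
      have := mul_le_mul_of_nonneg_left hJ hπ.le
      calc 2 * Real.arctan t = π * (2/π * Real.arctan t) := by field_simp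
        _ ≤ π * (s / Real.sqrt (y ^ 2 + s ^ 2)) := this
    have h2 : x / s * (2 * Real.arctan t) ≤ x / s * (π * (s / Real.sqrt (y ^ 2 + s ^ 2))) :=
      mul_le_mul_of_nonneg_left h1 (by positivity)
    have h3 : x / s * (π * (s / Real.sqrt (y ^ 2 + s ^ 2))) = π * (x / Real.sqrt (y ^ 2 + s ^ 2)) := by
      field_simp
    have h4 : x < Real.sqrt (y ^ 2 + s ^ 2) := by
      rw [hssq]
      have : x = Real.sqrt (x ^ 2) := (Real.sqrt_sq hx0.le).symm
      rw [this]
      apply Real.sqrt_lt_sqrt (by positivity)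
      nlinarith
    have h5 : x / Real.sqrt (y ^ 2 + s ^ 2) < 1 :=
      (div_lt_one (by positivity)).mpr h4
    calc x / s * (2 * Real.arctan t) ≤ π * (x / Real.sqrt (y ^ 2 + s ^ 2)) := h2.trans_eq h3
      _ < π * 1 := by exact (mul_lt_mul_iff_right₀ hπ).mpr h5
      _ = π := mul_one π
  · -- limit
    have hs_top : Tendsto (fun x : ℝ => Real.sqrt (x ^ 2 - 1)) atTop atTop := by
      have hsq : Tendsto Real.sqrt atTop atTop := by
        refine tendsto_atTop_atTop.mpr fun b => ⟨b ^ 2, fun a ha => ?_⟩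
        calc b ≤ Real.sqrt (b ^ 2) := by
                  rw [Real.sqrt_sq_eq_abs]; exact le_abs_self b
          _ ≤ Real.sqrt a := Real.sqrt_le_sqrt ha
      exact hsq.comp (tendsto_atTop_add_const_right _ _ (tendsto_pow_atTop (by norm_num)))
    have harct : Tendsto (fun x : ℝ => Real.arctan (Real.sqrt (x ^ 2 - 1) / y)) atTop (𝓝 (π/2)) := by
      have := Real.tendsto_arctan_atTop.mono_right nhdsWithin_le_nhds
      exact this.comp (hs_top.atTop_div_const hy0)
    have hratio : Tendsto (fun x : ℝ => x / Real.sqrt (x ^ 2 - 1)) atTop (𝓝 1) := by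
      have h1 : Tendsto (fun x : ℝ => Real.sqrt (1 + 1 / (x ^ 2 - 1))) atTop (𝓝 1) := by
        have : Tendsto (fun x : ℝ => 1 + 1 / (x ^ 2 - 1)) atTop (𝓝 1) := by
          have := (tendsto_atTop_add_const_right atTop (-1:ℝ)
            (tendsto_pow_atTop (n := 2) (by norm_num))).inv_tendsto_atTop
          simpa [one_div, sub_eq_add_neg] using (tendsto_const_nhds (x := (1:ℝ))).add this
        have hc : Tendsto Real.sqrt (𝓝 (1:ℝ)) (𝓝 1) := by
          simpa using (Real.continuous_sqrt.tendsto 1)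
        exact hc.comp this
      apply h1.congr'
      filter_upwards [eventually_gt_atTop (1:ℝ)] with x hx
      have hx0 : (0:ℝ) < x := by linarith
      have hs2 : (0:ℝ) < x ^ 2 - 1 := by nlinarith
      rw [show 1 + 1 / (x ^ 2 - 1) = x ^ 2 / (x ^ 2 - 1) by field_simp; ring]
      rw [Real.sqrt_div' _ (by positivity), Real.sqrt_sq hx0.le]
    have h := hratio.mul (harct.const_mul 2)
    have : (1:ℝ) * (2 * (π/2)) = π := by ring
    rwa [this] at h
end
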